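/- In (d+1)-dimensional Minkowski spacetime with d ≥ 2, there exist three events (x_A,t_A), (x_B,t_B), (x_C,t_C) and times t' > t > t_B such that the time-t slice of L_>(x_A,t_A) ∩ L_>(x_C,t_C) is contained in the time-t slice of L_>(x_B,t_B), but the time-t' slice of L_>(x_A,t_A) ∩ L_>(x_C,t_C) is not contained in the time-t' slice of L_>(x_B,t_B). Concretely, for a > 0, the events x_A = (-a,0,...,0), x_C = (a,0,...,0) at time 0, and x_B = (0,...,0) at time a/2, with a < t ≤ 5a/4 and t' > 5a/4, provide such an example. -/

import Mathlib

/-- The (strict) future lightcone of an event in (d+1)D Minkowski spacetime. -/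
def futureCone {d : ℕ} (x0 : EuclideanSpace ℝ (Fin d)) (t0 : ℝ) :
    Set (EuclideanSpace ℝ (Fin d) × ℝ) :=
  {p | ‖p.1 - x0‖ ≤ p.2 - t0 ∧ t0 < p.2}

/-- The time-`t` slice of a subset of (d+1)D Minkowski spacetime. -/
def timeSlice {d : ℕ} (S : Set (EuclideanSpace ℝ (Fin d) × ℝ)) (t : ℝ) :
    Set (EuclideanSpace ℝ (Fin d)) := {x | (x, t) ∈ S}

lemma single_neg' {d : ℕ} (i : Fin d) (r : ℝ) :
    EuclideanSpace.single i (-r) = -EuclideanSpace.single i r := by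
  ext j
  by_cases h : j = i <;> simp [EuclideanSpace.single_apply, h]

lemma norm_single_sub_single {d : ℕ} {i j : Fin d} (h : j ≠ i) (r b : ℝ) :
    ‖EuclideanSpace.single i r - EuclideanSpace.single j b‖ ^ 2 = r ^ 2 + b ^ 2 := by
  have hinner : (inner ℝ (EuclideanSpace.single i r) (EuclideanSpace.single j b) : ℝ) = 0 := by
    rw [EuclideanSpace.inner_single_left]
    simp [EuclideanSpace.single_apply, h, h.symm]
  rw [norm_sub_sq_real, hinner]
  simp only [EuclideanSpace.norm_single, Real.norm_eq_abs, sq_abs]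
  ring

/-- In `d ≥ 2` spatial dimensions, containment of the slice of the intersection of two
lightcones in the slice of a third at one time does not propagate to later times:
the concrete configuration `x_A = (-a,0,…,0)`, `x_C = (a,0,…,0)` at time `0` and
`x_B = 0` at time `a/2` is contained at any time `a < t ≤ 5a/4` but not at `t' > 5a/4`. -/
theorem slice_containment_fails_higher_dim {d : ℕ} (hd : 2 ≤ d) (a t t' : ℝ)
    (ha : 0 < a) (ht1 : a < t) (ht2 : t ≤ 5 * a / 4) (ht' : 5 * a / 4 < t')
    :
    a / 2 < t ∧ t < t' ∧
    (timeSlice (futureCone (EuclideanSpace.single (⟨0, by omega⟩ : Fin d) (-a)) 0 ∩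
        futureCone (EuclideanSpace.single (⟨0, by omega⟩ : Fin d) a) 0) t
      ⊆ timeSlice (futureCone (0 : EuclideanSpace ℝ (Fin d)) (a / 2)) t) ∧
    ¬ (timeSlice (futureCone (EuclideanSpace.single (⟨0, by omega⟩ : Fin d) (-a)) 0 ∩
        futureCone (EuclideanSpace.single (⟨0, by omega⟩ : Fin d) a) 0) t'
      ⊆ timeSlice (futureCone (0 : EuclideanSpace ℝ (Fin d)) (a / 2)) t') := by
  have h0d : (0 : ℕ) < d := by omega
  have h1d : (1 : ℕ) < d := by omega
  set i0 : Fin d := ⟨0, h0d⟩ with hi0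
  set i1 : Fin d := ⟨1, h1d⟩ with hi1
  have hne : i1 ≠ i0 := by simp [hi0, hi1, Fin.ext_iff]
  set e : EuclideanSpace ℝ (Fin d) := EuclideanSpace.single i0 a with he
  have hnege : EuclideanSpace.single i0 (-a) = -e := single_neg' i0 a
  have hnorme : ‖e‖ = a := by
    rw [he, EuclideanSpace.norm_single]
    exact abs_of_pos ha
  refine ⟨by linarith, by linarith, ?_, ?_⟩
  · intro x hx
    simp only [timeSlice, futureCone, Set.mem_setOf_eq, Set.mem_inter_iff, hnege] at hx ⊢
    obtain ⟨⟨h1, _⟩, ⟨h2, _⟩⟩ := hx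
    rw [sub_neg_eq_add, sub_zero] at h1
    rw [sub_zero] at h2
    have hpar := parallelogram_law_with_norm ℝ x e
    rw [hnorme] at hpar
    have hx2 : ‖x‖ * ‖x‖ ≤ t * t - a * a := by
      nlinarith [norm_nonneg (x + e), norm_nonneg (x - e)]
    constructor
    · rw [sub_zero]
      nlinarith [norm_nonneg x]
    · linarith
  · intro h
    set s : ℝ := Real.sqrt (t' ^ 2 - a ^ 2) with hs
    have hs0 : 0 ≤ s := Real.sqrt_nonneg _
    have hs2 : s ^ 2 = t' ^ 2 - a ^ 2 := Real.sq_sqrt (by nlinarith)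
    set x : EuclideanSpace ℝ (Fin d) := EuclideanSpace.single i1 s with hxdef
    clear_value s x
    have ht'0 : 0 < t' := by linarith
    have hmem : x ∈ timeSlice (futureCone (EuclideanSpace.single i0 (-a)) 0 ∩
        futureCone (EuclideanSpace.single i0 a) 0) t' := by
      simp only [timeSlice, futureCone, Set.mem_setOf_eq, Set.mem_inter_iff, sub_zero]
      have hA : ‖x - EuclideanSpace.single i0 (-a)‖ ^ 2 = t' ^ 2 := by
        rw [hxdef, norm_single_sub_single hne.symm]; nlinarith
      have hC : ‖x - EuclideanSpace.single i0 a‖ ^ 2 = t' ^ 2 := by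
        rw [hxdef, norm_single_sub_single hne.symm]; nlinarith
      have hA' : ‖x - EuclideanSpace.single i0 (-a)‖ = t' := by
        rw [← Real.sqrt_sq (norm_nonneg _), hA, Real.sqrt_sq ht'0.le]
      have hC' : ‖x - EuclideanSpace.single i0 a‖ = t' := by
        rw [← Real.sqrt_sq (norm_nonneg _), hC, Real.sqrt_sq ht'0.le]
      exact ⟨⟨hA'.le, ht'0⟩, ⟨hC'.le, ht'0⟩⟩
    have := h hmem
    simp only [timeSlice, futureCone, Set.mem_setOf_eq, sub_zero] at this
    obtain ⟨hle, _⟩ := this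
    rw [hxdef, EuclideanSpace.norm_single, Real.norm_eq_abs, abs_of_nonneg hs0] at hle
    nlinarith
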